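/- If U ⊆ {1,2,3}^k is a USP, then |U| ≤ (k+2 choose 2) · max over (n_1,n_2,n_3) with n_1+n_2+n_3 = k of min_i (k choose n_i). In particular, a USP of width k has size at most (3/2^{2/3} + o(1))^k. -/

import Mathlib

/-- At least two of three propositions hold. -/
def AtLeastTwo (P Q R : Prop) : Prop := (P ∧ Q) ∨ (P ∧ R) ∨ (Q ∧ R)

/-- A uniquely solvable puzzle of width `k`: a subset `U ⊆ {1,2,3}^k`
(symbols `1,2,3` represented by `0,1,2 : Fin 3`) such that for all permutations
`π₁, π₂, π₃` of `U`, either `π₁ = π₂ = π₃` or there exist `u ∈ U` and `i` such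
that at least two of `(π₁ u)_i = 1`, `(π₂ u)_i = 2`, `(π₃ u)_i = 3` hold. -/
def IsUSP {k : ℕ} (U : Set (Fin k → Fin 3)) : Prop :=
  ∀ π₁ π₂ π₃ : Equiv.Perm U, (π₁ = π₂ ∧ π₂ = π₃) ∨
    ∃ u : U, ∃ i : Fin k,
      AtLeastTwo (((π₁ u : U) : Fin k → Fin 3) i = 0)
        (((π₂ u : U) : Fin k → Fin 3) i = 1)
        (((π₃ u : U) : Fin k → Fin 3) i = 2)

open Finset

/-- Key step: in a USP, two elements with the same `j`-positions are equal. -/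
lemma usp_inj {k : ℕ} {U : Set (Fin k → Fin 3)} (h : IsUSP U) (j : Fin 3)
    {u v : Fin k → Fin 3} (hu : u ∈ U) (hv : v ∈ U)
    (hE : ∀ i, u i = j ↔ v i = j) : u = v := by
  by_contra hne
  have hne' : (⟨u, hu⟩ : U) ≠ ⟨v, hv⟩ := fun hh => hne (congrArg Subtype.val hh)
  set σ : Equiv.Perm U := Equiv.swap ⟨u, hu⟩ ⟨v, hv⟩ with hσ
  have hσne : σ ≠ 1 := by
    intro hh
    apply hne'
    have h1 : σ ⟨u, hu⟩ = ⟨v, hv⟩ := Equiv.swap_apply_left _ _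
    rw [hh] at h1
    simpa using h1
  obtain ⟨w, i, h1, h2⟩ : ∃ (w : U) (i : Fin k),
      ((σ w : U) : Fin k → Fin 3) i = j ∧ ((w : U) : Fin k → Fin 3) i ≠ j := by
    fin_cases j
    · rcases h σ 1 1 with ⟨h12, _⟩ | ⟨w, i, hA⟩
      · exact absurd h12 hσne
      · simp only [AtLeastTwo, Equiv.Perm.one_apply] at hA
        rcases hA with ⟨a, b⟩ | ⟨a, b⟩ | ⟨a, b⟩
        · exact ⟨w, i, a, by rw [b]; decide⟩
        · exact ⟨w, i, a, by rw [b]; decide⟩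
        · exact absurd (a.symm.trans b) (by decide)
    · rcases h 1 σ 1 with ⟨h12, _⟩ | ⟨w, i, hA⟩
      · exact absurd h12.symm hσne
      · simp only [AtLeastTwo, Equiv.Perm.one_apply] at hA
        rcases hA with ⟨a, b⟩ | ⟨a, b⟩ | ⟨a, b⟩
        · exact ⟨w, i, b, by rw [a]; decide⟩
        · exact absurd (a.symm.trans b) (by decide)
        · exact ⟨w, i, a, by rw [b]; decide⟩
    · rcases h 1 1 σ with ⟨_, h23⟩ | ⟨w, i, hA⟩
      · exact absurd h23.symm hσne
      · simp only [AtLeastTwo, Equiv.Perm.one_apply] at hA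
        rcases hA with ⟨a, b⟩ | ⟨a, b⟩ | ⟨a, b⟩
        · exact absurd (a.symm.trans b) (by decide)
        · exact ⟨w, i, b, by rw [a]; decide⟩
        · exact ⟨w, i, b, by rw [a]; decide⟩
  by_cases hwu : w = ⟨u, hu⟩
  · rw [hwu, hσ, Equiv.swap_apply_left] at h1
    rw [hwu] at h2
    exact h2 ((hE i).mpr h1)
  · by_cases hwv : w = ⟨v, hv⟩
    · rw [hwv, hσ, Equiv.swap_apply_right] at h1
      rw [hwv] at h2
      exact h2 ((hE i).mp h1)
    · rw [hσ, Equiv.swap_apply_of_ne_of_ne hwu hwv] at h1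
      exact h2 h1

lemma usp_card_bound {k : ℕ} (U : Finset (Fin k → Fin 3))
    (h : IsUSP (U : Set (Fin k → Fin 3))) :
    ∃ n₁ n₂ n₃ : ℕ, n₁ + n₂ + n₃ = k ∧
      U.card ≤ (k + 2).choose 2 *
        min (k.choose n₁) (min (k.choose n₂) (k.choose n₃)) := by
  classical
  set c : Fin 3 → (Fin k → Fin 3) → ℕ :=
    fun j u => (univ.filter fun i => u i = j).card with hc
  have hsum : ∀ u : Fin k → Fin 3, c 0 u + c 1 u + c 2 u = k := by
    intro u
    have h3 : (univ : Finset (Fin k)).card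
        = ∑ j : Fin 3, (univ.filter fun i : Fin k => u i = j).card :=
      Finset.card_eq_sum_card_fiberwise (fun i _ => mem_univ (u i))
    rw [card_univ, Fintype.card_fin, Fin.sum_univ_three] at h3
    simp only [hc]
    omega
  set T : Finset ((_ : ℕ) × ℕ) := (range (k+1)).sigma fun a => range (k+1-a) with hT
  have hTcard : T.card = (k + 2).choose 2 := by
    have h1 : T.card = ∑ a ∈ range (k+1), (k+1-a) := by
      simp [hT, card_sigma, card_range]
    have h2 : ∑ j ∈ range (k+1), (k+1 - (k+1-1-j)) = ∑ j ∈ range (k+1), (k+1-j) :=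
      Finset.sum_range_reflect _ _
    have h3 : ∀ j ∈ range (k+1), k+1 - (k+1-1-j) = j+1 := by
      intro j hj; rw [mem_range] at hj; omega
    rw [Finset.sum_congr rfl h3] at h2
    have h4 := Finset.sum_range_id_mul_two (k+2)
    have h5 : ∑ i ∈ range (k+2), i = ∑ j ∈ range (k+1), (j+1) := by
      rw [Finset.sum_range_succ' (fun i => i) (k+1)]
      simp
    rw [Nat.choose_two_right]
    have h6 : (k+2) * (k+2-1) = (k+2) * (k+1) := by norm_num
    rw [h6]
    set P := (k+2) * (k+1) with hP
    omega
  by_cases hU : U.Nonempty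
  · set g : (Fin k → Fin 3) → (_ : ℕ) × ℕ := fun u => ⟨c 0 u, c 1 u⟩ with hg
    have hmaps : ∀ u ∈ U, g u ∈ T := by
      intro u _
      have hs := hsum u
      rw [hT, mem_sigma, mem_range, mem_range]
      simp only [hg]
      omega
    have hTne : T.Nonempty := by
      refine ⟨⟨0, 0⟩, ?_⟩
      simp [hT]
    obtain ⟨t₀, ht₀T, hmax⟩ :=
      T.exists_max_image (fun t => (U.filter fun u => g u = t).card) hTne
    set F := U.filter fun u => g u = t₀ with hF
    have hcard : U.card = ∑ t ∈ T, (U.filter fun u => g u = t).card :=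
      Finset.card_eq_sum_card_fiberwise hmaps
    have hle : U.card ≤ T.card * F.card := by
      rw [hcard]
      calc ∑ t ∈ T, (U.filter fun u => g u = t).card
          ≤ ∑ _t ∈ T, F.card := Finset.sum_le_sum hmax
        _ = T.card * F.card := by rw [Finset.sum_const, smul_eq_mul]
    have ht₀ : t₀.1 + t₀.2 ≤ k := by
      rw [hT, mem_sigma, mem_range, mem_range] at ht₀T
      omega
    refine ⟨t₀.1, t₀.2, k - t₀.1 - t₀.2, by omega, ?_⟩
    have hcF : ∀ u ∈ F, c 0 u = t₀.1 ∧ c 1 u = t₀.2 ∧ c 2 u = k - t₀.1 - t₀.2 := by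
      intro u huF
      rw [hF, mem_filter] at huF
      obtain ⟨-, hgu⟩ := huF
      have h01 : c 0 u = t₀.1 ∧ HEq (c 1 u) t₀.2 := Sigma.mk.inj_iff.mp hgu
      have h0 : c 0 u = t₀.1 := h01.1
      have h1 : c 1 u = t₀.2 := eq_of_heq h01.2
      have := hsum u
      exact ⟨h0, h1, by omega⟩
    have fiber_le : ∀ (j : Fin 3) (n : ℕ), (∀ u ∈ F, c j u = n) →
        F.card ≤ k.choose n := by
      intro j n hn
      have hinj : Set.InjOn (fun u : Fin k → Fin 3 => univ.filter fun i => u i = j) F := by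
        intro u huF v hvF he
        have huU : u ∈ (U : Set (Fin k → Fin 3)) := by
          rw [Finset.mem_coe, hF, mem_filter] at huF; exact huF.1
        have hvU : v ∈ (U : Set (Fin k → Fin 3)) := by
          rw [Finset.mem_coe, hF, mem_filter] at hvF; exact hvF.1
        refine usp_inj h j huU hvU (fun i => ?_)
        have := Finset.ext_iff.mp he i
        simpa using this
      have hm : ∀ u ∈ F, (univ.filter fun i => u i = j) ∈
          Finset.powersetCard n (univ : Finset (Fin k)) := by
        intro u huF
        rw [Finset.mem_powersetCard]
        exact ⟨Finset.subset_univ _, hn u huF⟩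
      have := Finset.card_le_card_of_injOn _ hm hinj
      simpa [Finset.card_powersetCard, card_univ] using this
    have hF0 : F.card ≤ k.choose t₀.1 := fiber_le 0 _ (fun u hu => (hcF u hu).1)
    have hF1 : F.card ≤ k.choose t₀.2 := fiber_le 1 _ (fun u hu => (hcF u hu).2.1)
    have hF2 : F.card ≤ k.choose (k - t₀.1 - t₀.2) :=
      fiber_le 2 _ (fun u hu => (hcF u hu).2.2)
    calc U.card ≤ T.card * F.card := hle
      _ = (k + 2).choose 2 * F.card := by rw [hTcard]
      _ ≤ _ := Nat.mul_le_mul_left _ (le_min hF0 (le_min hF1 hF2))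
  · rw [Finset.not_nonempty_iff_eq_empty] at hU
    exact ⟨k, 0, 0, by omega, by simp [hU]⟩

lemma binom_bound {k m : ℕ} (hm : 3 * m ≤ k) :
    (k.choose m : ℝ) ≤ (3 / 2 ^ ((2 : ℝ) / 3)) ^ k := by
  have hmk : m ≤ k := by omega
  have hnat : k.choose m * 2 ^ (k - m) ≤ 3 ^ k := by
    calc k.choose m * 2 ^ (k - m) = 1 ^ m * 2 ^ (k - m) * k.choose m := by ring
      _ ≤ ∑ i ∈ range (k+1), 1 ^ i * 2 ^ (k - i) * k.choose i :=
          Finset.single_le_sum (f := fun i => 1 ^ i * 2 ^ (k - i) * k.choose i)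
            (fun i _ => Nat.zero_le _) (mem_range.mpr (by omega))
      _ = (1 + 2) ^ k := (add_pow 1 2 k).symm
      _ = 3 ^ k := by norm_num
  set a : ℝ := (2 : ℝ) ^ ((2 : ℝ) / 3) with ha
  have hapos : 0 < a := Real.rpow_pos_of_pos two_pos _
  have hak : a ^ k = (2 : ℝ) ^ (((2 : ℝ) / 3) * k) := by
    rw [ha, ← Real.rpow_natCast ((2:ℝ) ^ ((2:ℝ)/3)) k, ← Real.rpow_mul (by norm_num)]
  have hexp : (2 : ℝ) ^ (((2 : ℝ) / 3) * k) ≤ (2 : ℝ) ^ (((k - m : ℕ) : ℝ)) := by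
    apply Real.rpow_le_rpow_of_exponent_le one_le_two
    rw [Nat.cast_sub hmk]
    have : (3 : ℝ) * m ≤ k := by exact_mod_cast hm
    linarith
  have hcast : (2 : ℝ) ^ (((k - m : ℕ) : ℝ)) = ((2 ^ (k - m) : ℕ) : ℝ) := by
    rw [Real.rpow_natCast]; push_cast; ring
  have hkey : (k.choose m : ℝ) * a ^ k ≤ 3 ^ k := by
    calc (k.choose m : ℝ) * a ^ k
        ≤ (k.choose m : ℝ) * ((2 ^ (k - m) : ℕ) : ℝ) := by
          rw [hak]
          exact mul_le_mul_of_nonneg_left (hcast ▸ hexp) (Nat.cast_nonneg _)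
      _ = ((k.choose m * 2 ^ (k - m) : ℕ) : ℝ) := by push_cast; ring
      _ ≤ ((3 ^ k : ℕ) : ℝ) := by exact_mod_cast hnat
      _ = 3 ^ k := by push_cast; ring
  have hpow : (3 / a) ^ k = 3 ^ k / a ^ k := div_pow 3 a k
  rw [hpow, le_div_iff₀ (pow_pos hapos k)]
  exact hkey

theorem stmt_6 :
    (∀ (k : ℕ) (U : Finset (Fin k → Fin 3)), IsUSP (U : Set (Fin k → Fin 3)) →
      ∃ n₁ n₂ n₃ : ℕ, n₁ + n₂ + n₃ = k ∧
        U.card ≤ (k + 2).choose 2 *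
          min (k.choose n₁) (min (k.choose n₂) (k.choose n₃))) ∧
    (∀ ε : ℝ, 0 < ε → ∃ K : ℕ, ∀ k ≥ K, ∀ U : Finset (Fin k → Fin 3),
      IsUSP (U : Set (Fin k → Fin 3)) →
        (U.card : ℝ) ≤ (3 / 2 ^ ((2 : ℝ) / 3) + ε) ^ k) := by
  constructor
  · exact fun k U h => usp_card_bound U h
  · intro ε hε
    set cst : ℝ := 3 / 2 ^ ((2 : ℝ) / 3) with hcst
    have hcpos : 0 < cst := div_pos (by norm_num) (Real.rpow_pos_of_pos two_pos _)
    set δ : ℝ := ε / cst with hδdef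
    have hδ : 0 < δ := div_pos hε hcpos
    have htend := tendsto_pow_const_div_const_pow_of_one_lt 2
      (show (1 : ℝ) < 1 + δ by linarith)
    have hev : ∀ᶠ n : ℕ in Filter.atTop, ((n : ℝ) ^ 2 / (1 + δ) ^ n) < 1 / 9 :=
      htend.eventually_lt_const (by norm_num)
    obtain ⟨K, hK⟩ := Filter.eventually_atTop.mp hev
    refine ⟨max K 1, fun k hk U hU => ?_⟩
    have hkK : K ≤ k := le_trans (le_max_left _ _) hk
    have hk1 : 1 ≤ k := le_trans (le_max_right _ _) hk
    obtain ⟨n₁, n₂, n₃, hs, hcard⟩ := usp_card_bound U hU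
    -- pick the small index
    have hminle : ∃ m : ℕ, 3 * m ≤ k ∧
        min (k.choose n₁) (min (k.choose n₂) (k.choose n₃)) ≤ k.choose m := by
      rcases (show 3 * n₁ ≤ k ∨ 3 * n₂ ≤ k ∨ 3 * n₃ ≤ k by omega) with hm | hm | hm
      · exact ⟨n₁, hm, min_le_left _ _⟩
      · exact ⟨n₂, hm, le_trans (min_le_right _ _) (min_le_left _ _)⟩
      · exact ⟨n₃, hm, le_trans (min_le_right _ _) (min_le_right _ _)⟩
    obtain ⟨m, hm3, hmle⟩ := hminle
    have hchoose2 : (k + 2).choose 2 ≤ 9 * k ^ 2 := by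
      have h1 : (k + 2).choose 2 ≤ (k + 2) * (k + 2) := by
        rw [Nat.choose_two_right]
        calc (k + 2) * (k + 2 - 1) / 2 ≤ (k + 2) * (k + 2 - 1) := Nat.div_le_self _ _
          _ ≤ (k + 2) * (k + 2) := Nat.mul_le_mul_left _ (by omega)
      have h2 : (k + 2) * (k + 2) ≤ (3 * k) * (3 * k) :=
        Nat.mul_le_mul (by omega) (by omega)
      calc (k + 2).choose 2 ≤ (3 * k) * (3 * k) := le_trans h1 h2
        _ = 9 * k ^ 2 := by ring
    have hpoly : ((k + 2).choose 2 : ℝ) ≤ (1 + δ) ^ k := by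
      have h9 : 9 * (k : ℝ) ^ 2 < (1 + δ) ^ k := by
        have := hK k hkK
        have hpos : (0 : ℝ) < (1 + δ) ^ k := pow_pos (by linarith) k
        rw [div_lt_iff₀ hpos] at this
        linarith
      calc ((k + 2).choose 2 : ℝ) ≤ ((9 * k ^ 2 : ℕ) : ℝ) := by exact_mod_cast hchoose2
        _ = 9 * (k : ℝ) ^ 2 := by push_cast; ring
        _ ≤ (1 + δ) ^ k := le_of_lt h9
    have hbin : (k.choose m : ℝ) ≤ cst ^ k := binom_bound hm3
    have hstep1 : (U.card : ℝ) ≤ ((k + 2).choose 2 : ℝ) * (k.choose m : ℝ) := by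
      calc (U.card : ℝ)
          ≤ (((k + 2).choose 2 * min (k.choose n₁) (min (k.choose n₂) (k.choose n₃)) : ℕ) : ℝ) := by
            exact_mod_cast hcard
        _ ≤ ((((k + 2).choose 2) * k.choose m : ℕ) : ℝ) := by
            exact_mod_cast Nat.mul_le_mul_left _ hmle
        _ = ((k + 2).choose 2 : ℝ) * (k.choose m : ℝ) := by push_cast; ring
    have hfinal : (U.card : ℝ) ≤ (1 + δ) ^ k * cst ^ k := by
      calc (U.card : ℝ) ≤ ((k + 2).choose 2 : ℝ) * (k.choose m : ℝ) := hstep1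
        _ ≤ ((k + 2).choose 2 : ℝ) * cst ^ k :=
            mul_le_mul_of_nonneg_left hbin (Nat.cast_nonneg _)
        _ ≤ (1 + δ) ^ k * cst ^ k :=
            mul_le_mul_of_nonneg_right hpoly (pow_nonneg (le_of_lt hcpos) k)
    have heq : (1 + δ) ^ k * cst ^ k = (cst + ε) ^ k := by
      rw [← mul_pow]
      congr 1
      rw [hδdef, add_mul, one_mul, div_mul_cancel₀ ε hcpos.ne']
    rw [heq] at hfinal
    exact hfinal
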